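/- Let ν be a Lévy kernel on ℝⁿ and θ ∈ (0,1) with θ ∈ Θ_ν and tail condition (T_θ). Let f ∈ C²(ℝⁿ) satisfy sup_{|x|≥1} |x|^{−θ} max(|f(x)|, |x|·|∇f(x)|, |x|²·‖∇²f(x)‖) < ∞. Then 𝔍_{1,ν}[f](x) → 0 as |x| → ∞. -/

import Mathlib

open MeasureTheory Filter ENNReal

noncomputable def levyJ1 {n : ℕ}
    (ν : EuclideanSpace ℝ (Fin n) → Measure (EuclideanSpace ℝ (Fin n)))
    (f : EuclideanSpace ℝ (Fin n) → ℝ) (x : EuclideanSpace ℝ (Fin n)) : ℝ :=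
  ∫ y, (f (x + y) - f x - (if ‖y‖ < 1 then fderiv ℝ f x y else 0)) ∂(ν x)

/-- `ν` is a Lévy kernel on `ℝⁿ`. -/
def IsLevyKernel {n : ℕ}
    (ν : EuclideanSpace ℝ (Fin n) → Measure (EuclideanSpace ℝ (Fin n))) : Prop :=
  ∀ x, ν x {0} = 0 ∧ (∫⁻ y, ENNReal.ofReal (min 1 (‖y‖ ^ 2)) ∂(ν x)) ≠ ⊤

/-- `θ ∈ Θ_ν`. -/
def MomentCondition {n : ℕ}
    (ν : EuclideanSpace ℝ (Fin n) → Measure (EuclideanSpace ℝ (Fin n))) (θ : ℝ) : Prop :=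
  ∃ M : ℝ≥0∞, M ≠ ⊤ ∧ ∀ x,
    (∫⁻ y, ENNReal.ofReal (if ‖y‖ < 1 then ‖y‖ ^ 2 else ‖y‖ ^ θ) ∂(ν x)) ≤ M

/-- Tail condition (T_θ): `lim_{r→∞} sup_x ∫_{|y|>r} |y|^θ ν(x,dy) = 0`. -/
def TailCondition {n : ℕ}
    (ν : EuclideanSpace ℝ (Fin n) → Measure (EuclideanSpace ℝ (Fin n))) (θ : ℝ) : Prop :=
  Tendsto (fun r : ℝ => ⨆ x, ∫⁻ y in {y | r < ‖y‖}, ENNReal.ofReal (‖y‖ ^ θ) ∂(ν x))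
    atTop (nhds 0)

set_option maxHeartbeats 2000000 in
theorem levyJ1_vanishes_at_infinity {n : ℕ}
    (ν : EuclideanSpace ℝ (Fin n) → Measure (EuclideanSpace ℝ (Fin n)))
    (hν : IsLevyKernel ν)
    (θ : ℝ) (hθ0 : 0 < θ) (hθ1 : θ < 1)
    (hmom : MomentCondition ν θ) (htail : TailCondition ν θ)
    (f : EuclideanSpace ℝ (Fin n) → ℝ) (hf : ContDiff ℝ 2 f)
    (hgrowth : ∃ M : ℝ, ∀ x : EuclideanSpace ℝ (Fin n), 1 ≤ ‖x‖ →
      |f x| ≤ M * ‖x‖ ^ θ ∧ ‖x‖ * ‖fderiv ℝ f x‖ ≤ M * ‖x‖ ^ θ ∧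
        ‖x‖ ^ 2 * ‖fderiv ℝ (fderiv ℝ f) x‖ ≤ M * ‖x‖ ^ θ) :
    Tendsto (levyJ1 ν f) (Bornology.cobounded _) (nhds 0) := by
  obtain ⟨M', hM'top, hM'⟩ := hmom
  obtain ⟨Mg, hMg⟩ := hgrowth
  set M₀ : ℝ := max Mg 0 with hM₀def
  have hM₀0 : (0:ℝ) ≤ M₀ := le_max_right _ _
  have h1θ : (0:ℝ) < 1 - θ := by linarith
  -- growth reformulations
  have hgf0 : ∀ z : EuclideanSpace ℝ (Fin n), 1 ≤ ‖z‖ → |f z| ≤ M₀ * ‖z‖ ^ θ := by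
    intro z hz
    exact (hMg z hz).1.trans
      (mul_le_mul_of_nonneg_right (le_max_left _ _) (Real.rpow_nonneg (norm_nonneg z) θ))
  have hgf1 : ∀ z : EuclideanSpace ℝ (Fin n), 1 ≤ ‖z‖ →
      ‖fderiv ℝ f z‖ ≤ M₀ * ‖z‖ ^ (θ - 1) := by
    intro z hz
    have hz0 : (0:ℝ) < ‖z‖ := lt_of_lt_of_le one_pos hz
    have h2 : ‖z‖ * ‖fderiv ℝ f z‖ ≤ M₀ * ‖z‖ ^ θ :=
      (hMg z hz).2.1.trans
        (mul_le_mul_of_nonneg_right (le_max_left _ _) (Real.rpow_nonneg (norm_nonneg z) θ))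
    have key : M₀ * ‖z‖ ^ (θ - 1) = (M₀ * ‖z‖ ^ θ) / ‖z‖ := by
      rw [Real.rpow_sub hz0, Real.rpow_one, mul_div_assoc]
    rw [key, le_div_iff₀ hz0, mul_comm]
    exact h2
  have hgf2 : ∀ z : EuclideanSpace ℝ (Fin n), 1 ≤ ‖z‖ →
      ‖fderiv ℝ (fderiv ℝ f) z‖ ≤ M₀ * ‖z‖ ^ (θ - 2) := by
    intro z hz
    have hz0 : (0:ℝ) < ‖z‖ := lt_of_lt_of_le one_pos hz
    have h2 : ‖z‖ ^ 2 * ‖fderiv ℝ (fderiv ℝ f) z‖ ≤ M₀ * ‖z‖ ^ θ :=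
      (hMg z hz).2.2.trans
        (mul_le_mul_of_nonneg_right (le_max_left _ _) (Real.rpow_nonneg (norm_nonneg z) θ))
    have key : M₀ * ‖z‖ ^ (θ - 2) = (M₀ * ‖z‖ ^ θ) / ‖z‖ ^ 2 := by
      rw [Real.rpow_sub hz0, Real.rpow_two, mul_div_assoc]
    rw [key, le_div_iff₀ (by positivity), mul_comm]
    exact h2
  obtain ⟨C₀, hC₀⟩ := (isCompact_closedBall (0 : EuclideanSpace ℝ (Fin n)) 1).exists_bound_of_continuousOn
    hf.continuous.continuousOn
  set C₁ : ℝ := max C₀ 0 with hC₁def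
  have hC₁0 : (0:ℝ) ≤ C₁ := le_max_right _ _
  have habs : ∀ z : EuclideanSpace ℝ (Fin n), |f z| ≤ C₁ + M₀ * ‖z‖ ^ θ := by
    intro z
    rcases le_or_gt 1 ‖z‖ with hz | hz
    · linarith [hgf0 z hz]
    · have h1 : |f z| ≤ C₀ := by
        have := hC₀ z (by simpa [Metric.mem_closedBall, dist_zero_right] using hz.le)
        simpa [Real.norm_eq_abs] using this
      have h2 : (0:ℝ) ≤ M₀ * ‖z‖ ^ θ :=
        mul_nonneg hM₀0 (Real.rpow_nonneg (norm_nonneg z) θ)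
      linarith [le_max_left C₀ (0:ℝ)]
  have hdf : Differentiable ℝ f := hf.differentiable (by norm_num)
  have hdf2 : Differentiable ℝ (fderiv ℝ f) :=
    (hf.fderiv_right (m := 1) (by norm_num)).differentiable (by norm_num)
  rw [Metric.tendsto_nhds]
  intro ε hε
  set η : ℝ := ε / 2 with hηdef
  have hη : 0 < η := by positivity
  set Mr : ℝ := M'.toReal with hMrdef
  have hMr0 : (0:ℝ) ≤ Mr := ENNReal.toReal_nonneg
  have hM'eq : M' = ENNReal.ofReal Mr := (ENNReal.ofReal_toReal hM'top).symm
  set c : ℝ := η / (6 * (M₀ * Mr + 1)) with hcdef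
  have hc : 0 < c := by positivity
  set ε₀ : ℝ := min (1/2) ((min 1 c) ^ (1/(1-θ))) with hε₀def
  have hmin1c : 0 < min 1 c := lt_min one_pos hc
  have hε₀0 : 0 < ε₀ := lt_min (by norm_num) (Real.rpow_pos_of_pos hmin1c _)
  have hε₀half : ε₀ ≤ 1/2 := min_le_left _ _
  have hε₀pow : ε₀ ^ (1-θ) ≤ c := by
    have h1 : ε₀ ^ (1-θ) ≤ ((min 1 c) ^ (1/(1-θ))) ^ (1-θ) :=
      Real.rpow_le_rpow hε₀0.le (min_le_right _ _) h1θ.le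
    have h2 : ((min 1 c) ^ (1/(1-θ))) ^ (1-θ) = min 1 c := by
      rw [← Real.rpow_mul hmin1c.le, one_div, inv_mul_cancel₀ (ne_of_gt h1θ), Real.rpow_one]
    rw [h2] at h1
    exact h1.trans (min_le_right _ _)
  set A : ℝ := 2 * M₀ * ε₀ ^ (1-θ) with hAdef
  have hA0 : (0:ℝ) ≤ A := by positivity
  have hAMr : A * Mr ≤ η / 3 := by
    have h1 : A * Mr ≤ 2 * M₀ * c * Mr :=
      mul_le_mul_of_nonneg_right (mul_le_mul_of_nonneg_left hε₀pow (by positivity)) hMr0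
    have key : 2 * M₀ * c * Mr = (η/3) * ((M₀*Mr)/(M₀*Mr+1)) := by
      rw [hcdef]; field_simp; ring
    have hfrac : (M₀*Mr)/(M₀*Mr+1) ≤ 1 := by
      rw [div_le_one (by positivity)]; linarith
    have h2 : 2 * M₀ * c * Mr ≤ η / 3 := by
      rw [key]
      calc (η/3) * ((M₀*Mr)/(M₀*Mr+1)) ≤ (η/3) * 1 :=
            mul_le_mul_of_nonneg_left hfrac (by positivity)
        _ = η/3 := mul_one _
    linarith
  set C₃ : ℝ := 2 * C₁ + 4 * M₀ / ε₀ with hC₃def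
  have hC₃0 : (0:ℝ) ≤ C₃ := by positivity
  set δ₃ : ℝ := η / (3 * (C₃ + 1)) with hδ₃def
  have hδ₃ : 0 < δ₃ := by positivity
  have hC₃δ : C₃ * δ₃ ≤ η / 3 := by
    have key : C₃ * δ₃ = (η/3) * (C₃/(C₃+1)) := by rw [hδ₃def]; field_simp
    have hfrac : C₃/(C₃+1) ≤ 1 := by rw [div_le_one (by positivity)]; linarith
    rw [key]
    calc (η/3) * (C₃/(C₃+1)) ≤ (η/3) * 1 := mul_le_mul_of_nonneg_left hfrac (by positivity)
      _ = η/3 := mul_one _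
  obtain ⟨R₁, hR₁⟩ := eventually_atTop.mp
    (htail.eventually_lt_const (ENNReal.ofReal_pos.mpr hδ₃))
  set R : ℝ := max (max 2 (1/ε₀)) (max (R₁/ε₀) (6 * (M₀*Mr+1)/η)) with hRdef
  filter_upwards [tendsto_norm_cobounded_atTop.eventually (eventually_ge_atTop R)] with x hx
  have hx2 : 2 ≤ ‖x‖ := le_trans (le_trans (le_max_left _ _) (le_max_left _ _)) hx
  have hx0 : (0:ℝ) < ‖x‖ := by linarith
  have hxhalf : 1 ≤ ‖x‖ / 2 := by linarith
  have hxhalfpos : (0:ℝ) < ‖x‖/2 := by linarith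
  have hxinv : 1/ε₀ ≤ ‖x‖ := le_trans (le_trans (le_max_right _ _) (le_max_left _ _)) hx
  have hr1 : 1 ≤ ε₀ * ‖x‖ := by
    have h := (div_le_iff₀ hε₀0).mp hxinv
    calc (1:ℝ) ≤ ‖x‖ * ε₀ := h
      _ = ε₀ * ‖x‖ := mul_comm _ _
  have hrR₁ : R₁ ≤ ε₀ * ‖x‖ := by
    have h := (div_le_iff₀ hε₀0).mp (le_trans (le_trans (le_max_left _ _) (le_max_right _ _)) hx)
    calc R₁ ≤ ‖x‖ * ε₀ := h
      _ = ε₀ * ‖x‖ := mul_comm _ _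
  have hxη : 6*(M₀*Mr+1)/η ≤ ‖x‖ :=
    le_trans (le_trans (le_max_right _ _) (le_max_right _ _)) hx
  -- the region-1 coefficient bound
  have hKη : M₀ * (‖x‖/2) ^ (θ-2) * Mr ≤ η/3 := by
    have hbase : (‖x‖/2) ^ (θ-2) ≤ (‖x‖/2) ^ (-1:ℝ) :=
      Real.rpow_le_rpow_of_exponent_le hxhalf (by linarith)
    have hneg1 : (‖x‖/2) ^ (-1:ℝ) = 2/‖x‖ := by
      rw [Real.rpow_neg_one, inv_div]
    have h1 : M₀ * (‖x‖/2) ^ (θ-2) * Mr ≤ M₀ * (2/‖x‖) * Mr := by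
      rw [← hneg1]
      exact mul_le_mul_of_nonneg_right (mul_le_mul_of_nonneg_left hbase hM₀0) hMr0
    have e : M₀ * (2/‖x‖) * Mr = (2*(M₀*Mr))/‖x‖ := by ring
    have h2 : M₀ * (2/‖x‖) * Mr ≤ η/3 := by
      rw [e, div_le_iff₀ hx0]
      have e2 : (η/3) * (6*(M₀*Mr+1)/η) = 2*(M₀*Mr+1) := by field_simp; ring
      have h3 := mul_le_mul_of_nonneg_left hxη (le_of_lt (show (0:ℝ) < η/3 by positivity))
      rw [e2] at h3
      linarith [h3, mul_nonneg hM₀0 hMr0]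
    linarith
  -- norms on the ball
  have hballnorm : ∀ z ∈ Metric.closedBall x (ε₀*‖x‖), ‖x‖/2 ≤ ‖z‖ := by
    intro z hz
    have h1 : ‖z - x‖ ≤ ε₀*‖x‖ := by rwa [Metric.mem_closedBall, dist_eq_norm] at hz
    have h2 : ε₀*‖x‖ ≤ ‖x‖/2 := by
      have h2a := mul_le_mul_of_nonneg_right hε₀half (norm_nonneg x)
      linarith [h2a]
    linarith [norm_sub_norm_le x z, norm_sub_rev x z]
  have hball1 : ∀ z ∈ Metric.closedBall x (ε₀*‖x‖), 1 ≤ ‖z‖ :=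
    fun z hz => le_trans hxhalf (hballnorm z hz)
  have hHess : ∀ z ∈ Metric.closedBall x (ε₀*‖x‖),
      ‖fderiv ℝ (fderiv ℝ f) z‖ ≤ M₀ * (‖x‖/2) ^ (θ-2) := by
    intro z hz
    exact (hgf2 z (hball1 z hz)).trans
      (mul_le_mul_of_nonneg_left
        (Real.rpow_le_rpow_of_nonpos hxhalfpos (hballnorm z hz) (by linarith)) hM₀0)
  have hGrad : ∀ z ∈ Metric.closedBall x (ε₀*‖x‖),
      ‖fderiv ℝ f z‖ ≤ M₀ * (‖x‖/2) ^ (θ-1) := by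
    intro z hz
    exact (hgf1 z (hball1 z hz)).trans
      (mul_le_mul_of_nonneg_left
        (Real.rpow_le_rpow_of_nonpos hxhalfpos (hballnorm z hz) (by linarith)) hM₀0)
  -- pointwise estimates
  have P1 : ∀ y : EuclideanSpace ℝ (Fin n), ‖y‖ < 1 →
      |f (x+y) - f x - fderiv ℝ f x y| ≤ (M₀ * (‖x‖/2) ^ (θ-2)) * ‖y‖^2 := by
    intro y hy
    have hK0 : (0:ℝ) ≤ M₀ * (‖x‖/2) ^ (θ-2) :=
      mul_nonneg hM₀0 (Real.rpow_nonneg hxhalfpos.le _)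
    have hsub : Metric.closedBall x ‖y‖ ⊆ Metric.closedBall x (ε₀*‖x‖) :=
      Metric.closedBall_subset_closedBall (by linarith)
    have hxmem : x ∈ Metric.closedBall x ‖y‖ := Metric.mem_closedBall_self (norm_nonneg y)
    have hymem : x + y ∈ Metric.closedBall x ‖y‖ := by
      rw [Metric.mem_closedBall, dist_eq_norm, add_sub_cancel_left]
    have hLip : ∀ z ∈ Metric.closedBall x ‖y‖,
        ‖fderiv ℝ f z - fderiv ℝ f x‖ ≤ (M₀ * (‖x‖/2) ^ (θ-2)) * ‖y‖ := by
      intro z hz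
      have h := (convex_closedBall x ‖y‖).norm_image_sub_le_of_norm_fderiv_le
        (fun w _ => hdf2 w) (fun w hw => hHess w (hsub hw)) hxmem hz
      refine h.trans ?_
      have hzx : ‖z - x‖ ≤ ‖y‖ := by rwa [Metric.mem_closedBall, dist_eq_norm] at hz
      exact mul_le_mul_of_nonneg_left hzx hK0
    have h := (convex_closedBall x ‖y‖).norm_image_sub_le_of_norm_fderiv_le'
      (fun w _ => hdf w) hLip hxmem hymem
    rw [add_sub_cancel_left] at h
    calc |f (x+y) - f x - fderiv ℝ f x y| = ‖f (x+y) - f x - fderiv ℝ f x y‖ :=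
          (Real.norm_eq_abs _).symm
      _ ≤ (M₀ * (‖x‖/2) ^ (θ-2)) * ‖y‖ * ‖y‖ := h
      _ = (M₀ * (‖x‖/2) ^ (θ-2)) * ‖y‖^2 := by ring
  have P2 : ∀ y : EuclideanSpace ℝ (Fin n), 1 ≤ ‖y‖ → ‖y‖ ≤ ε₀*‖x‖ →
      |f (x+y) - f x| ≤ A * ‖y‖ ^ θ := by
    intro y hy1 hy2
    have hymem : x + y ∈ Metric.closedBall x (ε₀*‖x‖) := by
      rw [Metric.mem_closedBall, dist_eq_norm, add_sub_cancel_left]; exact hy2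
    have hxmem : x ∈ Metric.closedBall x (ε₀*‖x‖) := Metric.mem_closedBall_self (by positivity)
    have h := (convex_closedBall x (ε₀*‖x‖)).norm_image_sub_le_of_norm_fderiv_le
      (fun w _ => hdf w) hGrad hxmem hymem
    rw [add_sub_cancel_left] at h
    have hy0 : (0:ℝ) < ‖y‖ := lt_of_lt_of_le one_pos hy1
    have hsplit : ‖y‖ = ‖y‖^(1-θ) * ‖y‖^θ := by
      rw [← Real.rpow_add hy0]; norm_num
    have hbd : ‖y‖^(1-θ) ≤ (ε₀*‖x‖)^(1-θ) := Real.rpow_le_rpow (norm_nonneg y) hy2 h1θ.le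
    have hcoef : M₀*(‖x‖/2)^(θ-1) * (ε₀*‖x‖)^(1-θ) ≤ A := by
      have e1 : (‖x‖/2:ℝ)^(θ-1) = ((‖x‖/2)^(1-θ))⁻¹ := by
        rw [show θ-1 = -(1-θ) by ring, Real.rpow_neg hxhalfpos.le]
      have e2 : ((ε₀*‖x‖)/(‖x‖/2):ℝ) = 2*ε₀ := by
        field_simp
      have e3 : (‖x‖/2:ℝ)^(θ-1) * (ε₀*‖x‖)^(1-θ) = (2*ε₀)^(1-θ) := by
        rw [e1, inv_mul_eq_div,
          ← Real.div_rpow (by positivity : (0:ℝ) ≤ ε₀*‖x‖) (by positivity : (0:ℝ) ≤ ‖x‖/2), e2]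
      have e4 : (2*ε₀:ℝ)^(1-θ) = 2^(1-θ) * ε₀^(1-θ) := Real.mul_rpow (by norm_num) hε₀0.le
      have e5 : (2:ℝ)^(1-θ) ≤ 2 := by
        calc (2:ℝ)^(1-θ) ≤ (2:ℝ)^(1:ℝ) :=
              Real.rpow_le_rpow_of_exponent_le one_le_two (by linarith)
          _ = 2 := Real.rpow_one 2
      calc M₀*(‖x‖/2)^(θ-1) * (ε₀*‖x‖)^(1-θ) = M₀ * ((2*ε₀)^(1-θ)) := by rw [mul_assoc, e3]
        _ = M₀ * (2^(1-θ) * ε₀^(1-θ)) := by rw [e4]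
        _ ≤ A := by
            rw [hAdef]
            have h6 := mul_le_mul_of_nonneg_right e5 (Real.rpow_nonneg hε₀0.le (1-θ))
            calc M₀ * (2^(1-θ) * ε₀^(1-θ)) ≤ M₀ * (2 * ε₀^(1-θ)) :=
                  mul_le_mul_of_nonneg_left h6 hM₀0
              _ = 2 * M₀ * ε₀^(1-θ) := by ring
    calc |f (x+y) - f x| = ‖f (x+y) - f x‖ := (Real.norm_eq_abs _).symm
      _ ≤ M₀*(‖x‖/2)^(θ-1) * ‖y‖ := h
      _ = M₀*(‖x‖/2)^(θ-1) * (‖y‖^(1-θ) * ‖y‖^θ) := by rw [← hsplit]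
      _ ≤ M₀*(‖x‖/2)^(θ-1) * ((ε₀*‖x‖)^(1-θ) * ‖y‖^θ) := by
          refine mul_le_mul_of_nonneg_left
            (mul_le_mul_of_nonneg_right hbd (Real.rpow_nonneg (norm_nonneg y) θ)) ?_
          exact mul_nonneg hM₀0 (Real.rpow_nonneg hxhalfpos.le _)
      _ = (M₀*(‖x‖/2)^(θ-1) * (ε₀*‖x‖)^(1-θ)) * ‖y‖^θ := by ring
      _ ≤ A * ‖y‖^θ := mul_le_mul_of_nonneg_right hcoef (Real.rpow_nonneg (norm_nonneg y) θ)
  have P3 : ∀ y : EuclideanSpace ℝ (Fin n), ε₀*‖x‖ < ‖y‖ →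
      |f (x+y) - f x| ≤ C₃ * ‖y‖ ^ θ := by
    intro y hy
    have hy1 : 1 ≤ ‖y‖ := le_trans hr1 hy.le
    have hy0 : (0:ℝ) < ‖y‖ := by linarith
    have hyθ1 : 1 ≤ ‖y‖^θ := by
      calc (1:ℝ) = ‖y‖^(0:ℝ) := (Real.rpow_zero _).symm
        _ ≤ ‖y‖^θ := Real.rpow_le_rpow_of_exponent_le hy1 hθ0.le
    have hεle1 : ε₀ ≤ 1 := by linarith
    have hxle : ‖x‖ ≤ ‖y‖/ε₀ := by
      rw [le_div_iff₀ hε₀0]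
      calc ‖x‖*ε₀ = ε₀*‖x‖ := mul_comm _ _
        _ ≤ ‖y‖ := hy.le
    have h2ε : (1:ℝ) ≤ 2/ε₀ := by
      rw [le_div_iff₀ hε₀0]; linarith
    have hdd : ‖y‖ ≤ ‖y‖/ε₀ := le_div_self hy0.le hε₀0 hεle1
    have hde : (2/ε₀)*‖y‖ = ‖y‖/ε₀ + ‖y‖/ε₀ := by ring
    have hxy : ‖x + y‖ ≤ (2/ε₀)*‖y‖ := by
      calc ‖x+y‖ ≤ ‖x‖ + ‖y‖ := norm_add_le _ _
        _ ≤ ‖y‖/ε₀ + ‖y‖/ε₀ := by linarith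
        _ = (2/ε₀)*‖y‖ := hde.symm
    have hx2e : ‖x‖ ≤ (2/ε₀)*‖y‖ := by
      have : (0:ℝ) ≤ ‖y‖/ε₀ := by positivity
      linarith
    have hpow : ∀ a : ℝ, 0 ≤ a → a ≤ (2/ε₀)*‖y‖ → a^θ ≤ (2/ε₀)*‖y‖^θ := by
      intro a ha hab
      calc a^θ ≤ ((2/ε₀)*‖y‖)^θ := Real.rpow_le_rpow ha hab hθ0.le
        _ = (2/ε₀)^θ * ‖y‖^θ := Real.mul_rpow (by positivity) (norm_nonneg y)
        _ ≤ (2/ε₀)*‖y‖^θ := by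
            have h5 : (2/ε₀:ℝ)^θ ≤ 2/ε₀ := by
              calc (2/ε₀:ℝ)^θ ≤ (2/ε₀)^(1:ℝ) :=
                    Real.rpow_le_rpow_of_exponent_le h2ε (by linarith)
                _ = 2/ε₀ := Real.rpow_one _
            exact mul_le_mul_of_nonneg_right h5 (Real.rpow_nonneg (norm_nonneg y) θ)
    have hxyθ : ‖x+y‖^θ ≤ (2/ε₀)*‖y‖^θ := hpow _ (norm_nonneg _) hxy
    have hxθ : ‖x‖^θ ≤ (2/ε₀)*‖y‖^θ := hpow _ (norm_nonneg _) hx2e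
    have habs_sub : |f (x+y) - f x| ≤ |f (x+y)| + |f x| := by
      have := abs_add_le (f (x+y)) (-(f x))
      simpa [sub_eq_add_neg, abs_neg] using this
    have h1 := habs (x+y)
    have h2 := habs x
    have hM1 := mul_le_mul_of_nonneg_left hxyθ hM₀0
    have hM2 := mul_le_mul_of_nonneg_left hxθ hM₀0
    have hC₁y : C₁ ≤ C₁ * ‖y‖^θ := by
      calc C₁ = C₁ * 1 := (mul_one _).symm
        _ ≤ C₁ * ‖y‖^θ := mul_le_mul_of_nonneg_left hyθ1 hC₁0
    have hfin : |f (x+y)| + |f x| ≤ C₃ * ‖y‖^θ := by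
      rw [hC₃def]
      have e7 : M₀*((2/ε₀)*‖y‖^θ) + M₀*((2/ε₀)*‖y‖^θ) + C₁*‖y‖^θ + C₁*‖y‖^θ
          = (2 * C₁ + 4 * M₀ / ε₀) * ‖y‖^θ := by
        field_simp
        ring
      linarith [h1, h2, hM1, hM2, hC₁y, e7]
    linarith
  -- the integral estimate
  have hrec : levyJ1 ν f x =
      ∫ y, (f (x + y) - f x - (if ‖y‖ < 1 then fderiv ℝ f x y else 0)) ∂(ν x) := rfl
  rw [dist_zero_right, hrec]
  set F : EuclideanSpace ℝ (Fin n) → ℝ≥0∞ := fun y =>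
    ENNReal.ofReal ‖f (x + y) - f x - (if ‖y‖ < 1 then fderiv ℝ f x y else 0)‖ with hFdef
  have hmain : (∫⁻ y, F y ∂(ν x)) ≤ ENNReal.ofReal η := by
    set s₁ : Set (EuclideanSpace ℝ (Fin n)) := {y | ‖y‖ < 1} with hs₁def
    set s₂ : Set (EuclideanSpace ℝ (Fin n)) := {y | 1 ≤ ‖y‖ ∧ ‖y‖ ≤ ε₀*‖x‖} with hs₂def
    set s₃ : Set (EuclideanSpace ℝ (Fin n)) := {y | ε₀*‖x‖ < ‖y‖} with hs₃def
    have hm₁ : MeasurableSet s₁ := measurableSet_lt measurable_norm measurable_const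
    have hm₂ : MeasurableSet s₂ :=
      (measurableSet_le measurable_const measurable_norm).inter
        (measurableSet_le measurable_norm measurable_const)
    have hm₃ : MeasurableSet s₃ := measurableSet_lt measurable_const measurable_norm
    have hcover : s₁ ∪ (s₂ ∪ s₃) = Set.univ := by
      ext y
      simp only [hs₁def, hs₂def, hs₃def, Set.mem_union, Set.mem_setOf_eq, Set.mem_univ, iff_true]
      by_cases h1 : ‖y‖ < 1
      · exact Or.inl h1
      · rcases le_or_gt ‖y‖ (ε₀*‖x‖) with h2 | h2
        · exact Or.inr (Or.inl ⟨not_lt.mp h1, h2⟩)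
        · exact Or.inr (Or.inr h2)
    have hsplit : ∫⁻ y, F y ∂(ν x) ≤ (∫⁻ y in s₁, F y ∂(ν x)) +
        ((∫⁻ y in s₂, F y ∂(ν x)) + ∫⁻ y in s₃, F y ∂(ν x)) := by
      calc ∫⁻ y, F y ∂(ν x) = ∫⁻ y in s₁ ∪ (s₂ ∪ s₃), F y ∂(ν x) := by
            rw [hcover, setLIntegral_univ]
        _ ≤ (∫⁻ y in s₁, F y ∂(ν x)) + ∫⁻ y in s₂ ∪ s₃, F y ∂(ν x) :=
            lintegral_union_le _ _ _
        _ ≤ _ := add_le_add le_rfl (lintegral_union_le _ _ _)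
    have hb₁ : ∫⁻ y in s₁, F y ∂(ν x) ≤ ENNReal.ofReal (M₀ * (‖x‖/2) ^ (θ-2)) * M' := by
      have hK0 : (0:ℝ) ≤ M₀ * (‖x‖/2) ^ (θ-2) :=
        mul_nonneg hM₀0 (Real.rpow_nonneg hxhalfpos.le _)
      have hpt : ∀ y ∈ s₁, F y ≤ ENNReal.ofReal (M₀ * (‖x‖/2) ^ (θ-2)) *
          ENNReal.ofReal (if ‖y‖ < 1 then ‖y‖^2 else ‖y‖^θ) := by
        intro y hy
        have hy' : ‖y‖ < 1 := hy
        simp only [hFdef, if_pos hy']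
        rw [← ENNReal.ofReal_mul hK0]
        apply ENNReal.ofReal_le_ofReal
        rw [Real.norm_eq_abs]
        exact P1 y hy'
      calc ∫⁻ y in s₁, F y ∂(ν x) ≤ ∫⁻ y in s₁, ENNReal.ofReal (M₀ * (‖x‖/2) ^ (θ-2)) *
            ENNReal.ofReal (if ‖y‖ < 1 then ‖y‖^2 else ‖y‖^θ) ∂(ν x) :=
            setLIntegral_mono' hm₁ hpt
        _ = ENNReal.ofReal (M₀ * (‖x‖/2) ^ (θ-2)) *
            ∫⁻ y in s₁, ENNReal.ofReal (if ‖y‖ < 1 then ‖y‖^2 else ‖y‖^θ) ∂(ν x) :=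
            lintegral_const_mul' _ _ ENNReal.ofReal_ne_top
        _ ≤ ENNReal.ofReal (M₀ * (‖x‖/2) ^ (θ-2)) * M' :=
            mul_le_mul_right ((setLIntegral_le_lintegral _ _).trans (hM' x)) _
    have hb₂ : ∫⁻ y in s₂, F y ∂(ν x) ≤ ENNReal.ofReal A * M' := by
      have hpt : ∀ y ∈ s₂, F y ≤ ENNReal.ofReal A *
          ENNReal.ofReal (if ‖y‖ < 1 then ‖y‖^2 else ‖y‖^θ) := by
        intro y hy
        have hy1 : 1 ≤ ‖y‖ := hy.1
        have hy2 : ‖y‖ ≤ ε₀*‖x‖ := hy.2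
        have hnot : ¬ (‖y‖ < 1) := not_lt.mpr hy1
        simp only [hFdef, if_neg hnot, sub_zero]
        rw [← ENNReal.ofReal_mul hA0]
        apply ENNReal.ofReal_le_ofReal
        rw [Real.norm_eq_abs]
        exact P2 y hy1 hy2
      calc ∫⁻ y in s₂, F y ∂(ν x) ≤ ∫⁻ y in s₂, ENNReal.ofReal A *
            ENNReal.ofReal (if ‖y‖ < 1 then ‖y‖^2 else ‖y‖^θ) ∂(ν x) :=
            setLIntegral_mono' hm₂ hpt
        _ = ENNReal.ofReal A *
            ∫⁻ y in s₂, ENNReal.ofReal (if ‖y‖ < 1 then ‖y‖^2 else ‖y‖^θ) ∂(ν x) :=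
            lintegral_const_mul' _ _ ENNReal.ofReal_ne_top
        _ ≤ ENNReal.ofReal A * M' :=
            mul_le_mul_right ((setLIntegral_le_lintegral _ _).trans (hM' x)) _
    have hb₃ : ∫⁻ y in s₃, F y ∂(ν x) ≤ ENNReal.ofReal C₃ * ENNReal.ofReal δ₃ := by
      have hpt : ∀ y ∈ s₃, F y ≤ ENNReal.ofReal C₃ * ENNReal.ofReal (‖y‖^θ) := by
        intro y hy
        have hy' : ε₀*‖x‖ < ‖y‖ := hy
        have hy1 : 1 ≤ ‖y‖ := le_trans hr1 hy'.le
        have hnot : ¬ (‖y‖ < 1) := not_lt.mpr hy1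
        simp only [hFdef, if_neg hnot, sub_zero]
        rw [← ENNReal.ofReal_mul hC₃0]
        apply ENNReal.ofReal_le_ofReal
        rw [Real.norm_eq_abs]
        exact P3 y hy'
      calc ∫⁻ y in s₃, F y ∂(ν x) ≤
            ∫⁻ y in s₃, ENNReal.ofReal C₃ * ENNReal.ofReal (‖y‖^θ) ∂(ν x) :=
            setLIntegral_mono' hm₃ hpt
        _ = ENNReal.ofReal C₃ * ∫⁻ y in s₃, ENNReal.ofReal (‖y‖^θ) ∂(ν x) :=
            lintegral_const_mul' _ _ ENNReal.ofReal_ne_top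
        _ ≤ ENNReal.ofReal C₃ * ENNReal.ofReal δ₃ := by
            apply mul_le_mul_right
            have hsup := hR₁ (ε₀*‖x‖) hrR₁
            exact le_trans
              (le_iSup (fun x' => ∫⁻ y in {y | ε₀*‖x‖ < ‖y‖},
                ENNReal.ofReal (‖y‖^θ) ∂(ν x')) x) hsup.le
    have hK0 : (0:ℝ) ≤ M₀ * (‖x‖/2) ^ (θ-2) :=
      mul_nonneg hM₀0 (Real.rpow_nonneg hxhalfpos.le _)
    calc ∫⁻ y, F y ∂(ν x) ≤ _ := hsplit
      _ ≤ ENNReal.ofReal (M₀ * (‖x‖/2) ^ (θ-2)) * M' +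
          (ENNReal.ofReal A * M' + ENNReal.ofReal C₃ * ENNReal.ofReal δ₃) :=
          add_le_add hb₁ (add_le_add hb₂ hb₃)
      _ = ENNReal.ofReal (M₀ * (‖x‖/2) ^ (θ-2) * Mr + (A * Mr + C₃ * δ₃)) := by
          rw [hM'eq, ← ENNReal.ofReal_mul hK0, ← ENNReal.ofReal_mul hA0,
            ← ENNReal.ofReal_mul hC₃0,
            ← ENNReal.ofReal_add (mul_nonneg hA0 hMr0) (mul_nonneg hC₃0 hδ₃.le),
            ← ENNReal.ofReal_add (mul_nonneg hK0 hMr0)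
              (add_nonneg (mul_nonneg hA0 hMr0) (mul_nonneg hC₃0 hδ₃.le))]
      _ ≤ ENNReal.ofReal η := by
          apply ENNReal.ofReal_le_ofReal
          linarith
  calc ‖∫ y, (f (x + y) - f x - (if ‖y‖ < 1 then fderiv ℝ f x y else 0)) ∂(ν x)‖
      ≤ (∫⁻ y, F y ∂(ν x)).toReal := norm_integral_le_lintegral_norm _
    _ ≤ η := ENNReal.toReal_le_of_le_ofReal hη.le hmain
    _ < ε := by rw [hηdef]; linarith
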